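/- For even n ≥ 6, the set S = {a_i, c_i : i = 0,…,n−1} is a distance-equalizer set of S''_n, and consequently eqdim(S''_n) = 2n. -/

import Mathlib

set_option linter.unusedSectionVars false
set_option linter.unusedVariables false
set_option maxHeartbeats 1000000

/-- `S` is a distance-equalizer set of `G`. -/
def IsDistEqSet {V : Type*} (G : SimpleGraph V) (S : Set V) : Prop :=
  ∀ u v : V, u ∉ S → v ∉ S → u ≠ v → ∃ x ∈ S, G.dist u x = G.dist v x

/-- The equidistant dimension of `G`. -/
noncomputable def eqdim {V : Type*} (G : SimpleGraph V) : ℕ :=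
  sInf {k | ∃ S : Finset V, IsDistEqSet G ↑S ∧ S.card = k}

/-- The convex polytope graph `S''_n` on vertex layers a=0, b=1, c=2, d=3. -/
def S2Graph (n : ℕ) : SimpleGraph (Fin 4 × ZMod n) :=
  SimpleGraph.fromRel (fun x y =>
    (x.1 = y.1 ∧ y.2 = x.2 + 1) ∨
    (x.1 = 0 ∧ y.1 = 1 ∧ y.2 = x.2) ∨
    (x.1 = 1 ∧ y.1 = 2 ∧ y.2 = x.2) ∨
    (x.1 = 2 ∧ y.1 = 3 ∧ y.2 = x.2) ∨
    (x.1 = 1 ∧ y.1 = 2 ∧ x.2 = y.2 + 1))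

namespace S2pf
variable (n : ℕ)

def g (t : ZMod n) : ℕ := min t.val (n - t.val)
def h (t : ZMod n) : ℕ := min (g n t) (g n (t + 1))

def D (u v : Fin 4 × ZMod n) : ℕ :=
  (max u.1.val v.1.val - min u.1.val v.1.val) +
  (if u.1.val ≤ 1 ∧ 2 ≤ v.1.val then h n (v.2 - u.2)
   else if v.1.val ≤ 1 ∧ 2 ≤ u.1.val then h n (u.2 - v.2)
   else g n (v.2 - u.2))

section
variable [NeZero n] [Fact (1 < n)]

lemma g_zero : g n 0 = 0 := by simp [g, ZMod.val_zero]

lemma g_neg (t : ZMod n) : g n (-t) = g n t := by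
  rcases eq_or_ne t 0 with rfl | ht
  · simp
  · have h1 : (-t).val = n - t.val := by rw [ZMod.neg_val, if_neg ht]
    have h2 := t.val_lt
    have h3 : t.val ≠ 0 := by simpa [ZMod.val_eq_zero] using ht
    simp only [g, h1]; omega

lemma val_add_one (t : ZMod n) : (t + 1).val = (t.val + 1) % n := by
  rw [ZMod.val_add, ZMod.val_one]

lemma g_lip (t : ZMod n) : g n (t + 1) ≤ g n t + 1 := by
  have h1 := val_add_one n t
  have h2 := t.val_lt
  simp only [g]
  rcases Nat.lt_or_ge (t.val + 1) n with hlt | hge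
  · rw [h1, Nat.mod_eq_of_lt hlt]; omega
  · have : t.val + 1 = n := by omega
    rw [h1, this, Nat.mod_self]; omega

lemma g_lip' (t : ZMod n) : g n t ≤ g n (t + 1) + 1 := by
  have h1 := val_add_one n t
  have h2 := t.val_lt
  have hn := (Fact.out : 1 < n)
  simp only [g]
  rcases Nat.lt_or_ge (t.val + 1) n with hlt | hge
  · rw [h1, Nat.mod_eq_of_lt hlt]; omega
  · have : t.val + 1 = n := by omega
    rw [h1, this, Nat.mod_self]; omega

lemma h_le_g (t : ZMod n) : h n t ≤ g n t := min_le_left _ _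
lemma h_le_g' (t : ZMod n) : h n t ≤ g n (t + 1) := min_le_right _ _
lemma g_le_h (t : ZMod n) : g n t ≤ h n t + 1 := by
  have := g_lip' n t; simp only [h]; omega
lemma g1_le_h (t : ZMod n) : g n (t + 1) ≤ h n t + 1 := by
  have := g_lip n t; simp only [h]; omega

lemma h_neg (t : ZMod n) : h n (-t) = min (g n t) (g n (t - 1)) := by
  have : -t + 1 = -(t - 1) := by ring
  rw [h, this, g_neg, g_neg]

lemma h_neg_sub (t : ZMod n) : h n (-t - 1) = h n t := by
  have e : -t - 1 = -(t + 1) := by ring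
  rw [e, h_neg, h]
  have : t + 1 - 1 = t := by ring
  rw [this, min_comm]

lemma h_lip (t : ZMod n) : h n (t + 1) ≤ h n t + 1 := by
  have h1 := g_lip n t
  have h2 := g_lip n (t + 1)
  simp only [h]; omega

lemma h_lip' (t : ZMod n) : h n t ≤ h n (t + 1) + 1 := by
  have h1 := g_lip' n t
  have h2 := g_lip' n (t + 1)
  simp only [h]; omega

lemma g_natCast (m : ℕ) (hm : m < n) : g n (m : ZMod n) = min m (n - m) := by
  rw [g, ZMod.val_cast_of_lt hm]


lemma one_ne_zero' : (1 : ZMod n) ≠ 0 := by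
  have h1 : (1 : ZMod n).val = 1 := ZMod.val_one n
  intro hc; rw [hc, ZMod.val_zero] at h1; omega

lemma adj_row (r : Fin 4) (i : ZMod n) : (S2Graph n).Adj (r, i) (r, i + 1) := by
  rw [S2Graph, SimpleGraph.fromRel_adj]
  refine ⟨?_, Or.inl (Or.inl ⟨rfl, rfl⟩)⟩
  intro hc
  have : i = i + 1 := congrArg Prod.snd hc
  exact one_ne_zero' n (left_eq_add.mp this)

lemma adj01 (i : ZMod n) : (S2Graph n).Adj ((0 : Fin 4), i) ((1 : Fin 4), i) := by
  rw [S2Graph, SimpleGraph.fromRel_adj]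
  exact ⟨by simp, Or.inl (Or.inr (Or.inl ⟨rfl, rfl, rfl⟩))⟩

lemma adj12 (i : ZMod n) : (S2Graph n).Adj ((1 : Fin 4), i) ((2 : Fin 4), i) := by
  rw [S2Graph, SimpleGraph.fromRel_adj]
  exact ⟨by simp, Or.inl (Or.inr (Or.inr (Or.inl ⟨rfl, rfl, rfl⟩)))⟩

lemma adj23 (i : ZMod n) : (S2Graph n).Adj ((2 : Fin 4), i) ((3 : Fin 4), i) := by
  rw [S2Graph, SimpleGraph.fromRel_adj]
  exact ⟨by simp, Or.inl (Or.inr (Or.inr (Or.inr (Or.inl ⟨rfl, rfl, rfl⟩))))⟩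

lemma adj_diag (i : ZMod n) : (S2Graph n).Adj ((1 : Fin 4), i + 1) ((2 : Fin 4), i) := by
  rw [S2Graph, SimpleGraph.fromRel_adj]
  exact ⟨by simp, Or.inl (Or.inr (Or.inr (Or.inr (Or.inr ⟨rfl, rfl, rfl⟩))))⟩

lemma reach_row (r : Fin 4) (i : ZMod n) (m : ℕ) :
    (S2Graph n).Reachable (r, i) (r, i + (m : ZMod n)) := by
  induction m with
  | zero => simpa using SimpleGraph.Reachable.refl ((r, i) : Fin 4 × ZMod n)
  | succ m ih =>
      have e : i + ((m + 1 : ℕ) : ZMod n) = (i + (m : ZMod n)) + 1 := by push_cast; ring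
      rw [e]
      exact ih.trans (adj_row n r _).reachable

lemma reach_row' (r : Fin 4) (i j : ZMod n) : (S2Graph n).Reachable (r, i) (r, j) := by
  have := reach_row n r i (j - i).val
  rwa [ZMod.natCast_zmod_val, add_sub_cancel] at this

lemma reach_col (r : Fin 4) (i : ZMod n) : (S2Graph n).Reachable ((0 : Fin 4), i) (r, i) := by
  fin_cases r
  · exact SimpleGraph.Reachable.refl _
  · exact (adj01 n i).reachable
  · exact ((adj01 n i).reachable).trans (adj12 n i).reachable
  · exact ((adj01 n i).reachable).trans ((adj12 n i).reachable.trans (adj23 n i).reachable)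

lemma conn : (S2Graph n).Connected := by
  rw [SimpleGraph.connected_iff]
  refine ⟨fun u v => ?_, ⟨((0 : Fin 4), 0)⟩⟩
  obtain ⟨r, i⟩ := u; obtain ⟨s, j⟩ := v
  exact ((reach_col n r i).symm.trans (reach_row' n 0 i j)).trans (reach_col n s j)


lemma dist_adj {u v : Fin 4 × ZMod n} (hadj : (S2Graph n).Adj u v) :
    (S2Graph n).dist u v ≤ 1 := by
  simpa using SimpleGraph.dist_le hadj.toWalk

lemma dist_row_nat (r : Fin 4) (i : ZMod n) (m : ℕ) :
    (S2Graph n).dist (r, i) (r, i + (m : ZMod n)) ≤ m := by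
  induction m with
  | zero => simp
  | succ m ih =>
      have e : i + ((m + 1 : ℕ) : ZMod n) = (i + (m : ZMod n)) + 1 := by push_cast; ring
      rw [e]
      calc (S2Graph n).dist (r, i) (r, i + (m : ZMod n) + 1)
          ≤ (S2Graph n).dist (r, i) (r, i + (m : ZMod n)) +
            (S2Graph n).dist (r, i + (m : ZMod n)) (r, i + (m : ZMod n) + 1) :=
            (conn n).dist_triangle
        _ ≤ m + 1 := Nat.add_le_add ih (dist_adj n (adj_row n r _))

lemma dist_row (r : Fin 4) (i j : ZMod n) :
    (S2Graph n).dist (r, i) (r, j) ≤ g n (j - i) := by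
  rcases eq_or_ne j i with rfl | hne
  · simp [g, sub_self, ZMod.val_zero]
  · have h1 : (S2Graph n).dist (r, i) (r, j) ≤ (j - i).val := by
      have := dist_row_nat n r i (j - i).val
      rwa [ZMod.natCast_zmod_val, add_sub_cancel] at this
    have h2 : (S2Graph n).dist (r, i) (r, j) ≤ n - (j - i).val := by
      have := dist_row_nat n r j (i - j).val
      rw [ZMod.natCast_zmod_val, add_sub_cancel] at this
      have hv : (i - j).val = n - (j - i).val := by
        have : i - j = -(j - i) := by ring
        rw [this, ZMod.neg_val, if_neg (sub_ne_zero.mpr hne)]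
      rw [SimpleGraph.dist_comm] at this
      omega
    simp only [g]; omega

lemma dist_le_D (u v : Fin 4 × ZMod n) : (S2Graph n).dist u v ≤ D n u v := by
  obtain ⟨r, i⟩ := u; obtain ⟨s, j⟩ := v
  have tri : ∀ a b c : Fin 4 × ZMod n,
      (S2Graph n).dist a c ≤ (S2Graph n).dist a b + (S2Graph n).dist b c :=
    fun a b c => (conn n).dist_triangle
  have hrow := dist_row n
  have hadj : ∀ {a b : Fin 4 × ZMod n}, (S2Graph n).Adj a b → (S2Graph n).dist a b ≤ 1 :=
    fun h => dist_adj n h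
  have comm : ∀ a b : Fin 4 × ZMod n, (S2Graph n).dist a b = (S2Graph n).dist b a :=
    fun a b => SimpleGraph.dist_comm
  have diag : ∀ k : ZMod n, (S2Graph n).Adj ((1 : Fin 4), k) ((2 : Fin 4), k - 1) := by
    intro k
    have := adj_diag n (k - 1)
    rwa [sub_add_cancel] at this
  have hneg : ∀ a b : ZMod n, g n (a - b) = g n (b - a) := by
    intro a b
    have : a - b = -(b - a) := by ring
    rw [this, g_neg]
  have L01 : ∀ a b : ZMod n, (S2Graph n).dist ((0 : Fin 4), a) ((1 : Fin 4), b) ≤ 1 + g n (b - a) := by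
    intro a b
    have h1 := tri ((0 : Fin 4), a) ((1 : Fin 4), a) ((1 : Fin 4), b)
    have h2 := hadj (adj01 n a)
    have h3 := hrow 1 a b
    omega
  have L12 : ∀ a b : ZMod n, (S2Graph n).dist ((1 : Fin 4), a) ((2 : Fin 4), b) ≤
      1 + min (g n (b - a)) (g n (b - a + 1)) := by
    intro a b
    have h1 := tri ((1 : Fin 4), a) ((2 : Fin 4), a) ((2 : Fin 4), b)
    have h2 := hadj (adj12 n a)
    have h3 := hrow 2 a b
    have h4 := tri ((1 : Fin 4), a) ((2 : Fin 4), a - 1) ((2 : Fin 4), b)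
    have h5 := hadj (diag a)
    have h6 := hrow 2 (a - 1) b
    have e : b - (a - 1) = b - a + 1 := by ring
    rw [e] at h6
    omega
  have L23 : ∀ a b : ZMod n, (S2Graph n).dist ((2 : Fin 4), a) ((3 : Fin 4), b) ≤ 1 + g n (b - a) := by
    intro a b
    have h1 := tri ((2 : Fin 4), a) ((3 : Fin 4), a) ((3 : Fin 4), b)
    have h2 := hadj (adj23 n a)
    have h3 := hrow 3 a b
    omega
  have L13 : ∀ a b : ZMod n, (S2Graph n).dist ((1 : Fin 4), a) ((3 : Fin 4), b) ≤
      2 + min (g n (b - a)) (g n (b - a + 1)) := by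
    intro a b
    have h1 := tri ((1 : Fin 4), a) ((2 : Fin 4), a) ((3 : Fin 4), b)
    have h2 := hadj (adj12 n a)
    have h3 := L23 a b
    have h4 := tri ((1 : Fin 4), a) ((2 : Fin 4), a - 1) ((3 : Fin 4), b)
    have h5 := hadj (diag a)
    have h6 := L23 (a - 1) b
    have e : b - (a - 1) = b - a + 1 := by ring
    rw [e] at h6
    omega
  have L02 : ∀ a b : ZMod n, (S2Graph n).dist ((0 : Fin 4), a) ((2 : Fin 4), b) ≤
      2 + min (g n (b - a)) (g n (b - a + 1)) := by
    intro a b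
    have h1 := tri ((0 : Fin 4), a) ((1 : Fin 4), a) ((2 : Fin 4), b)
    have h2 := hadj (adj01 n a)
    have h3 := L12 a b
    omega
  have L03 : ∀ a b : ZMod n, (S2Graph n).dist ((0 : Fin 4), a) ((3 : Fin 4), b) ≤
      3 + min (g n (b - a)) (g n (b - a + 1)) := by
    intro a b
    have h1 := tri ((0 : Fin 4), a) ((1 : Fin 4), a) ((3 : Fin 4), b)
    have h2 := hadj (adj01 n a)
    have h3 := L13 a b
    omega
  fin_cases r <;> fin_cases s <;> simp only [D, h] <;> norm_num
  · simpa using hrow 0 i j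
  · simpa using L01 i j
  · simpa using L02 i j
  · simpa using L03 i j
  · refine le_trans (le_of_eq SimpleGraph.dist_comm) ?_
    rw [← hneg i j]
    simpa using L01 j i
  · simpa using hrow 1 i j
  · simpa using L12 i j
  · simpa using L13 i j
  · refine le_trans (le_of_eq SimpleGraph.dist_comm) ?_
    simpa using L02 j i
  · refine le_trans (le_of_eq SimpleGraph.dist_comm) ?_
    simpa using L12 j i
  · simpa using hrow 2 i j
  · simpa using L23 i j
  · refine le_trans (le_of_eq SimpleGraph.dist_comm) ?_
    simpa using L03 j i
  · refine le_trans (le_of_eq SimpleGraph.dist_comm) ?_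
    simpa using L13 j i
  · refine le_trans (le_of_eq SimpleGraph.dist_comm) ?_
    rw [← hneg i j]
    simpa using L23 j i
  · simpa using hrow 3 i j

lemma h_def' (t : ZMod n) : h n t = min (g n t) (g n (t + 1)) := rfl

lemma D_lip (v u w : Fin 4 × ZMod n) (hadj : (S2Graph n).Adj u w) :
    D n u v ≤ D n w v + 1 := by
  obtain ⟨s, k⟩ := v
  rw [S2Graph, SimpleGraph.fromRel_adj] at hadj
  obtain ⟨hne, hrel⟩ := hadj
  have hs4 : s.val < 4 := s.isLt
  rcases hrel with (⟨hr, hc⟩ | ⟨h1, h2, h3⟩ | ⟨h1, h2, h3⟩ | ⟨h1, h2, h3⟩ | ⟨h1, h2, h3⟩) |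
      (⟨hr, hc⟩ | ⟨h1, h2, h3⟩ | ⟨h1, h2, h3⟩ | ⟨h1, h2, h3⟩ | ⟨h1, h2, h3⟩)
  -- 1: w = (u.1, u.2+1)
  · obtain ⟨r, i⟩ := u; obtain ⟨r', i'⟩ := w
    simp only at hr hc; subst hr hc
    simp only [D]
    have e1 : k - (i + 1) = (k - i) - 1 := by ring
    have e2 : (i + 1) - k = (i - k) + 1 := by ring
    have g1 : g n (k - i) ≤ g n (k - i - 1) + 1 := by
      have := g_lip n (k - i - 1); simpa using this
    have h1 : h n (k - i) ≤ h n (k - i - 1) + 1 := by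
      have := h_lip n (k - i - 1); simpa using this
    have h2 : h n (i - k) ≤ h n (i - k + 1) + 1 := h_lip' n (i - k)
    rw [e1, e2]
    split_ifs <;> omega
  -- 2: u = (0,i), w = (1,i)
  · obtain ⟨r, i⟩ := u; obtain ⟨r', i'⟩ := w
    simp only at h1 h2 h3; subst h1 h2 h3
    simp only [D]
    split_ifs <;> simp_all <;> omega
  -- 3: u = (1,i), w = (2,i)
  · obtain ⟨r, i⟩ := u; obtain ⟨r', i'⟩ := w
    simp only at h1 h2 h3; subst h1 h2 h3
    simp only [D]
    have A : h n (i' - k) = min (g n (k - i')) (g n (k - i' - 1)) := by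
      have := h_neg n (k - i')
      rwa [show -(k - i') = i' - k by ring] at this
    have B : g n (k - i') ≤ g n (k - i' - 1) + 1 := by
      have := g_lip n (k - i' - 1); simpa using this
    have C := h_def' n (k - i')
    have E := g_lip' n (k - i')
    split_ifs <;> omega
  -- 4: u = (2,i), w = (3,i)
  · obtain ⟨r, i⟩ := u; obtain ⟨r', i'⟩ := w
    simp only at h1 h2 h3; subst h1 h2 h3
    simp only [D]
    split_ifs <;> simp_all <;> omega
  -- 5: u = (1, i'+1), w = (2, i')
  · obtain ⟨r, i⟩ := u; obtain ⟨r', i'⟩ := w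
    simp only at h1 h2 h3; subst h1; subst h2; subst h3
    simp only [D]
    have e1 : k - (i' + 1) = k - i' - 1 := by ring
    have A : h n (i' - k) = h n (k - i' - 1) := by
      have := h_neg_sub n (k - i' - 1)
      rwa [show -(k - i' - 1) - 1 = i' - k by ring] at this
    have C : h n (k - i' - 1) = min (g n (k - i' - 1)) (g n (k - i')) := by
      have := h_def' n (k - i' - 1)
      rwa [show k - i' - 1 + 1 = k - i' by ring] at this
    have B : g n (k - i') ≤ g n (k - i' - 1) + 1 := by
      have := g_lip n (k - i' - 1); simpa using this
    have B' : g n (k - i' - 1) ≤ g n (k - i') + 1 := by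
      have := g_lip' n (k - i' - 1); simpa using this
    rw [e1]
    split_ifs <;> omega
  -- 6: u = (w.1, w.2+1)  (reverse row edge)
  · obtain ⟨r, i⟩ := u; obtain ⟨r', i'⟩ := w
    simp only at hr hc; subst hr hc
    simp only [D]
    have e1 : k - (i' + 1) = (k - i') - 1 := by ring
    have e2 : (i' + 1) - k = (i' - k) + 1 := by ring
    have g1 : g n (k - i' - 1) ≤ g n (k - i') + 1 := by
      have := g_lip' n (k - i' - 1); simpa using this
    have h1 : h n (k - i' - 1) ≤ h n (k - i') + 1 := by
      have := h_lip' n (k - i' - 1); simpa using this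
    have h2 : h n (i' - k + 1) ≤ h n (i' - k) + 1 := h_lip n (i' - k)
    rw [e1, e2]
    split_ifs <;> omega
  -- 7: w = (0,i), u = (1,i)
  · obtain ⟨r, i⟩ := u; obtain ⟨r', i'⟩ := w
    simp only at h1 h2 h3; subst h1 h2 h3
    simp only [D]
    split_ifs <;> simp_all <;> omega
  -- 8: w = (1,i), u = (2,i)
  · obtain ⟨r, i⟩ := u; obtain ⟨r', i⟩ := w
    simp only at h1 h2 h3; subst h1 h2 h3
    simp only [D]
    have A : h n (i - k) = min (g n (k - i)) (g n (k - i - 1)) := by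
      have := h_neg n (k - i)
      rwa [show -(k - i) = i - k by ring] at this
    have B : g n (k - i) ≤ g n (k - i - 1) + 1 := by
      have := g_lip n (k - i - 1); simpa using this
    have C := h_def' n (k - i)
    have E := g_lip' n (k - i)
    split_ifs <;> omega
  -- 9: w = (2,i), u = (3,i)
  · obtain ⟨r, i⟩ := u; obtain ⟨r', i'⟩ := w
    simp only at h1 h2 h3; subst h1 h2 h3
    simp only [D]
    split_ifs <;> simp_all <;> omega
  -- 10: w = (1, i+1), u = (2, i)  i.e. u=(2,i), w=(1,i+1)
  · obtain ⟨r, i⟩ := u; obtain ⟨r', i'⟩ := w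
    simp only at h1 h2 h3; subst h1; subst h2; subst h3
    simp only [D]
    have e1 : k - (i + 1) = k - i - 1 := by ring
    have A : h n (i - k) = h n (k - i - 1) := by
      have := h_neg_sub n (k - i - 1)
      rwa [show -(k - i - 1) - 1 = i - k by ring] at this
    have C : h n (k - i - 1) = min (g n (k - i - 1)) (g n (k - i)) := by
      have := h_def' n (k - i - 1)
      rwa [show k - i - 1 + 1 = k - i by ring] at this
    have B : g n (k - i) ≤ g n (k - i - 1) + 1 := by
      have := g_lip n (k - i - 1); simpa using this
    have B' : g n (k - i - 1) ≤ g n (k - i) + 1 := by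
      have := g_lip' n (k - i - 1); simpa using this
    rw [e1]
    split_ifs <;> omega

lemma D_self (u : Fin 4 × ZMod n) : D n u u = 0 := by
  obtain ⟨r, i⟩ := u
  simp only [D]
  have : ¬ (r.val ≤ 1 ∧ 2 ≤ r.val) := by omega
  rw [if_neg this, if_neg this]
  simp [g_zero]

lemma D_le_walk {u v : Fin 4 × ZMod n} (p : (S2Graph n).Walk u v) : D n u v ≤ p.length := by
  induction p with
  | nil => simp [D_self]
  | @cons a b c hadj q ih =>
      have := D_lip n c a b hadj
      simp only [SimpleGraph.Walk.length_cons]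
      omega

lemma dist_eq_D (u v : Fin 4 × ZMod n) : (S2Graph n).dist u v = D n u v := by
  refine le_antisymm (dist_le_D n u v) ?_
  obtain ⟨p, hp⟩ := ((conn n).preconnected u v).exists_walk_length_eq_dist
  rw [← hp]
  exact D_le_walk n p

lemma g_natCast' (m : ℕ) (hm : m ≤ n) : g n (m : ZMod n) = min m (n - m) := by
  rcases Nat.lt_or_ge m n with hlt | hge
  · exact g_natCast n m hlt
  · have hmn : m = n := by omega
    subst hmn
    rw [ZMod.natCast_self, g_zero]
    omega

lemma h_natCast (m : ℕ) (hm : m + 1 ≤ n) :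
    h n (m : ZMod n) = min (min m (n - m)) (min (m + 1) (n - (m + 1))) := by
  have e : (m : ZMod n) + 1 = ((m + 1 : ℕ) : ZMod n) := by push_cast; ring
  rw [h, e, g_natCast' n m (by omega), g_natCast' n (m + 1) hm]


lemma D10 (i k : ZMod n) : D n ((1 : Fin 4), i) ((0 : Fin 4), k) = 1 + g n (k - i) := by
  simp only [D]; norm_num

lemma D12 (i k : ZMod n) : D n ((1 : Fin 4), i) ((2 : Fin 4), k) = 1 + h n (k - i) := by
  simp only [D]; norm_num

lemma D30 (i k : ZMod n) : D n ((3 : Fin 4), i) ((0 : Fin 4), k) = 3 + h n (i - k) := by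
  simp only [D]
  rw [if_neg (by decide), if_pos (by decide)]
  simp only [show ((3 : Fin 4)).val = 3 from rfl, show ((0 : Fin 4)).val = 0 from rfl]
  norm_num

lemma D32 (i k : ZMod n) : D n ((3 : Fin 4), i) ((2 : Fin 4), k) = 1 + g n (k - i) := by
  simp only [D]
  rw [if_neg (by decide), if_neg (by decide)]
  simp only [show ((3 : Fin 4)).val = 3 from rfl, show ((2 : Fin 4)).val = 2 from rfl]
  norm_num

lemma equalize_bb (i j : ZMod n) (hij : i ≠ j) :
    ∃ x : Fin 4 × ZMod n, (x.1 = 0 ∨ x.1 = 2) ∧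
      D n ((1 : Fin 4), i) x = D n ((1 : Fin 4), j) x := by
  have hcast : (((j - i).val : ℕ) : ZMod n) = j - i := ZMod.natCast_zmod_val _
  rcases Nat.even_or_odd (j - i).val with ⟨c, hc⟩ | ⟨c, hc⟩
  · refine ⟨((0 : Fin 4), i + (c : ZMod n)), Or.inl rfl, ?_⟩
    rw [D10, D10]
    have h2 : (c : ZMod n) + (c : ZMod n) = j - i := by
      rw [← hcast, hc]; push_cast; ring
    rw [show i + (c : ZMod n) - i = (c : ZMod n) by ring,
        show i + (c : ZMod n) - j = -(c : ZMod n) by linear_combination h2, g_neg]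
  · refine ⟨((2 : Fin 4), i + (c : ZMod n)), Or.inr rfl, ?_⟩
    rw [D12, D12]
    have h2 : (c : ZMod n) + (c : ZMod n) + 1 = j - i := by
      rw [← hcast, hc]; push_cast; ring
    rw [show i + (c : ZMod n) - i = (c : ZMod n) by ring,
        show i + (c : ZMod n) - j = -(c : ZMod n) - 1 by linear_combination h2, h_neg_sub]

lemma equalize_dd (i j : ZMod n) (hij : i ≠ j) :
    ∃ x : Fin 4 × ZMod n, (x.1 = 0 ∨ x.1 = 2) ∧
      D n ((3 : Fin 4), i) x = D n ((3 : Fin 4), j) x := by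
  have hcast : (((j - i).val : ℕ) : ZMod n) = j - i := ZMod.natCast_zmod_val _
  rcases Nat.even_or_odd (j - i).val with ⟨c, hc⟩ | ⟨c, hc⟩
  · refine ⟨((2 : Fin 4), i + (c : ZMod n)), Or.inr rfl, ?_⟩
    rw [D32, D32]
    have h2 : (c : ZMod n) + (c : ZMod n) = j - i := by
      rw [← hcast, hc]; push_cast; ring
    rw [show i + (c : ZMod n) - i = (c : ZMod n) by ring,
        show i + (c : ZMod n) - j = -(c : ZMod n) by linear_combination h2, g_neg]
  · refine ⟨((0 : Fin 4), i + (c : ZMod n) + 1), Or.inl rfl, ?_⟩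
    rw [D30, D30]
    have h2 : (c : ZMod n) + (c : ZMod n) + 1 = j - i := by
      rw [← hcast, hc]; push_cast; ring
    rw [show i - (i + (c : ZMod n) + 1) = -(c : ZMod n) - 1 by ring,
        show j - (i + (c : ZMod n) + 1) = (c : ZMod n) by linear_combination -h2, h_neg_sub]

lemma equalize_bd (hn6 : 6 ≤ n) (hev : Even n) (i j : ZMod n) :
    ∃ x : Fin 4 × ZMod n, (x.1 = 0 ∨ x.1 = 2) ∧
      D n ((1 : Fin 4), i) x = D n ((3 : Fin 4), j) x := by
  obtain ⟨N, hN⟩ := hev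
  have hcast : (((j - i).val : ℕ) : ZMod n) = j - i := ZMod.natCast_zmod_val _
  have hvlt : (j - i).val < n := ZMod.val_lt _
  rcases Nat.even_or_odd (j - i).val with ⟨c, hc⟩ | ⟨c, hc⟩
  · refine ⟨((2 : Fin 4), i + (c : ZMod n)), Or.inr rfl, ?_⟩
    rw [D12, D32]
    have h2 : (c : ZMod n) + (c : ZMod n) = j - i := by
      rw [← hcast, hc]; push_cast; ring
    rw [show i + (c : ZMod n) - i = (c : ZMod n) by ring,
        show i + (c : ZMod n) - j = -(c : ZMod n) by linear_combination h2, g_neg]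
    have hc1 : c ≤ N - 1 := by omega
    rw [h_natCast n c (by omega), g_natCast' n c (by omega)]
    omega
  · refine ⟨((2 : Fin 4), i + ((N + c : ℕ) : ZMod n)), Or.inr rfl, ?_⟩
    rw [D12, D32]
    have hcN : c ≤ N - 1 := by omega
    have h2 : ((2 * c + 1 : ℕ) : ZMod n) = j - i := by rw [← hcast, hc]
    have e2 : i + ((N + c : ℕ) : ZMod n) - j = ((N - c - 1 : ℕ) : ZMod n) := by
      have h3 : ((N + c : ℕ) : ZMod n) = ((N - c - 1 : ℕ) : ZMod n) + ((2 * c + 1 : ℕ) : ZMod n) := by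
        rw [show (N + c : ℕ) = (N - c - 1 : ℕ) + (2 * c + 1 : ℕ) by omega]
        push_cast; ring
      rw [h3, h2]; ring
    rw [show i + ((N + c : ℕ) : ZMod n) - i = ((N + c : ℕ) : ZMod n) by ring, e2]
    rw [h_natCast n (N + c) (by omega), g_natCast' n (N - c - 1) (by omega)]
    omega

lemma D_ab_ne (i : ZMod n) (x : Fin 4 × ZMod n) :
    D n ((0 : Fin 4), i) x ≠ D n ((1 : Fin 4), i) x := by
  obtain ⟨s, k⟩ := x
  have hs4 : s.val < 4 := s.isLt
  simp only [D, show ((0 : Fin 4)).val = 0 from rfl, show ((1 : Fin 4)).val = 1 from rfl]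
  split_ifs <;> omega

lemma D_cd_ne (i : ZMod n) (x : Fin 4 × ZMod n) :
    D n ((2 : Fin 4), i) x ≠ D n ((3 : Fin 4), i) x := by
  obtain ⟨s, k⟩ := x
  have hs4 : s.val < 4 := s.isLt
  simp only [D, show ((2 : Fin 4)).val = 2 from rfl, show ((3 : Fin 4)).val = 3 from rfl]
  split_ifs <;> omega


end
end S2pf

theorem stmt17 (n : ℕ) (hn : 6 ≤ n) (hev : Even n) :
    IsDistEqSet (S2Graph n) {x : Fin 4 × ZMod n | x.1 = 0 ∨ x.1 = 2} ∧
    eqdim (S2Graph n) = 2 * n := by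
  haveI : NeZero n := ⟨by omega⟩
  haveI : Fact (1 < n) := ⟨by omega⟩
  have hmain : IsDistEqSet (S2Graph n) {x : Fin 4 × ZMod n | x.1 = 0 ∨ x.1 = 2} := by
    intro u v hu hv huv
    simp only [Set.mem_setOf_eq] at hu hv
    push_neg at hu hv
    obtain ⟨ru, iu⟩ := u
    obtain ⟨rv, iv⟩ := v
    have hru : ru = 1 ∨ ru = 3 := by
      obtain ⟨h1, h2⟩ := hu; fin_cases ru <;> simp_all
    have hrv : rv = 1 ∨ rv = 3 := by
      obtain ⟨h1, h2⟩ := hv; fin_cases rv <;> simp_all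
    have key : ∀ x : Fin 4 × ZMod n, (x.1 = 0 ∨ x.1 = 2) →
        x ∈ {x : Fin 4 × ZMod n | x.1 = 0 ∨ x.1 = 2} := fun x hx => hx
    rcases hru with rfl | rfl <;> rcases hrv with rfl | rfl
    · have hij : iu ≠ iv := fun hc => huv (by rw [hc])
      obtain ⟨x, hx1, hx2⟩ := S2pf.equalize_bb n iu iv hij
      exact ⟨x, key x hx1, by rw [S2pf.dist_eq_D, S2pf.dist_eq_D]; exact hx2⟩
    · obtain ⟨x, hx1, hx2⟩ := S2pf.equalize_bd n hn hev iu iv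
      exact ⟨x, key x hx1, by rw [S2pf.dist_eq_D, S2pf.dist_eq_D]; exact hx2⟩
    · obtain ⟨x, hx1, hx2⟩ := S2pf.equalize_bd n hn hev iv iu
      exact ⟨x, key x hx1, by rw [S2pf.dist_eq_D, S2pf.dist_eq_D]; exact hx2.symm⟩
    · have hij : iu ≠ iv := fun hc => huv (by rw [hc])
      obtain ⟨x, hx1, hx2⟩ := S2pf.equalize_dd n iu iv hij
      exact ⟨x, key x hx1, by rw [S2pf.dist_eq_D, S2pf.dist_eq_D]; exact hx2⟩
  refine ⟨hmain, ?_⟩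
  -- the canonical set as a finset
  set S0 : Finset (Fin 4 × ZMod n) :=
    ({(0 : Fin 4), (2 : Fin 4)} : Finset (Fin 4)) ×ˢ (Finset.univ : Finset (ZMod n)) with hS0
  have hS0coe : (↑S0 : Set (Fin 4 × ZMod n)) = {x : Fin 4 × ZMod n | x.1 = 0 ∨ x.1 = 2} := by
    ext ⟨r, k⟩
    simp [hS0]
  have hS0card : S0.card = 2 * n := by
    rw [hS0, Finset.card_product, Finset.card_univ, ZMod.card,
      show ({(0 : Fin 4), (2 : Fin 4)} : Finset (Fin 4)).card = 2 from by decide]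
  have hub : eqdim (S2Graph n) ≤ 2 * n := by
    apply Nat.sInf_le
    exact ⟨S0, by rw [hS0coe]; exact hmain, hS0card⟩
  have hlb : ∀ k ∈ {k | ∃ S : Finset (Fin 4 × ZMod n),
      IsDistEqSet (S2Graph n) ↑S ∧ S.card = k}, 2 * n ≤ k := by
    rintro k ⟨S, hS, rfl⟩
    -- for each i, S hits {a_i, b_i} and {c_i, d_i}
    have hab : ∀ i : ZMod n, ((0 : Fin 4), i) ∈ S ∨ ((1 : Fin 4), i) ∈ S := by
      intro i
      by_contra hc
      push_neg at hc
      obtain ⟨x, hxS, hxd⟩ := hS ((0 : Fin 4), i) ((1 : Fin 4), i)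
        (by simpa using hc.1) (by simpa using hc.2) (by simp)
      rw [S2pf.dist_eq_D, S2pf.dist_eq_D] at hxd
      exact S2pf.D_ab_ne n i x hxd
    have hcd : ∀ i : ZMod n, ((2 : Fin 4), i) ∈ S ∨ ((3 : Fin 4), i) ∈ S := by
      intro i
      by_contra hc
      push_neg at hc
      obtain ⟨x, hxS, hxd⟩ := hS ((2 : Fin 4), i) ((3 : Fin 4), i)
        (by simpa using hc.1) (by simpa using hc.2) (by simp)
      rw [S2pf.dist_eq_D, S2pf.dist_eq_D] at hxd
      exact S2pf.D_cd_ne n i x hxd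
    classical
    set f : Fin 2 × ZMod n → Fin 4 × ZMod n := fun p =>
      if p.1.val = 0 then
        (if ((0 : Fin 4), p.2) ∈ S then ((0 : Fin 4), p.2) else ((1 : Fin 4), p.2))
      else
        (if ((2 : Fin 4), p.2) ∈ S then ((2 : Fin 4), p.2) else ((3 : Fin 4), p.2)) with hf
    have hsnd : ∀ p, (f p).2 = p.2 := by
      intro p; rw [hf]; dsimp only; split_ifs <;> rfl
    have hfst0 : ∀ p : Fin 2 × ZMod n, p.1.val = 0 → (f p).1.val ≤ 1 := by
      intro p h0; rw [hf]; dsimp only; rw [if_pos h0]; split_ifs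
      · show ((0 : Fin 4)).val ≤ 1; decide
      · show ((1 : Fin 4)).val ≤ 1; decide
    have hfst1 : ∀ p : Fin 2 × ZMod n, ¬ p.1.val = 0 → 2 ≤ (f p).1.val := by
      intro p h0; rw [hf]; dsimp only; rw [if_neg h0]; split_ifs
      · show 2 ≤ ((2 : Fin 4)).val; decide
      · show 2 ≤ ((3 : Fin 4)).val; decide
    have hmem : ∀ p ∈ (Finset.univ : Finset (Fin 2 × ZMod n)), f p ∈ S := by
      rintro ⟨e, i⟩ -
      rw [hf]; dsimp only
      by_cases he : (e : Fin 2).val = 0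
      · rw [if_pos he]
        rcases hab i with h | h
        · rwa [if_pos h]
        · rcases Decidable.em (((0 : Fin 4), i) ∈ S) with h' | h'
          · rwa [if_pos h']
          · rwa [if_neg h']
      · rw [if_neg he]
        rcases hcd i with h | h
        · rwa [if_pos h]
        · rcases Decidable.em (((2 : Fin 4), i) ∈ S) with h' | h'
          · rwa [if_pos h']
          · rwa [if_neg h']
    have hinj : Set.InjOn f ↑(Finset.univ : Finset (Fin 2 × ZMod n)) := by
      rintro ⟨e, i⟩ - ⟨e', i'⟩ - heq
      have h2 : i = i' := by
        have := congrArg Prod.snd heq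
        rwa [hsnd, hsnd] at this
      subst h2
      have hv := congrArg (fun z : Fin 4 × ZMod n => z.1.val) heq
      have he2 : e.val < 2 := e.isLt
      have he2' : e'.val < 2 := e'.isLt
      by_cases he : e.val = 0 <;> by_cases he' : e'.val = 0
      · have : e = e' := Fin.ext (by omega)
        rw [this]
      · exfalso
        have a1 := hfst0 (e, i) he
        have a2 := hfst1 (e', i) he'
        omega
      · exfalso
        have a1 := hfst1 (e, i) he
        have a2 := hfst0 (e', i) he'
        omega
      · have : e = e' := Fin.ext (by omega)
        rw [this]
    have hcard := Finset.card_le_card_of_injOn f hmem hinj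
    have : (Finset.univ : Finset (Fin 2 × ZMod n)).card = 2 * n := by
      rw [Finset.card_univ, Fintype.card_prod, Fintype.card_fin, ZMod.card]
    omega
  have hlb' : 2 * n ≤ eqdim (S2Graph n) := by
    apply le_csInf
    · exact ⟨2 * n, S0, by rw [hS0coe]; exact hmain, hS0card⟩
    · exact hlb
  omega
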